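/- arXiv:2202.06231 — 2 statements merged into one kernel-verified Lean document; each statement's English description precedes it below -/
import Mathlib

section
/- For α, β, Ω > 0 and any real s with s > max(-α, -β), a Gamma-Gamma random variable X with parameters (α, β, Ω) satisfies E[X^s] = (Ω/(αβ))^s · Γ(α+s)Γ(β+s)/(Γ(α)Γ(β)). In particular E[X] = Ω. -/
open MeasureTheory ProbabilityTheory Real Set
open scoped ENNReal NNReal

/-- The modified Bessel function of the second kind `K_ν(x)`, via its
integral representation (valid for `x > 0`). -/
noncomputable def besselK (ν x : ℝ) : ℝ :=
  ∫ t in Set.Ioi (0:ℝ), Real.exp (-x * Real.cosh t) * Real.cosh (ν * t)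

lemma cosh_ge (t : ℝ) : 1 + t^2/2 ≤ Real.cosh t := by
  have h1 := Real.cosh_two_mul (t/2)
  rw [show 2*(t/2) = t by ring] at h1
  have h2 : Real.cosh (t/2)^2 = Real.sinh (t/2)^2 + 1 := Real.cosh_sq (t/2)
  have h3 : |t/2| ≤ Real.sinh |t/2| := by
    rcases eq_or_lt_of_le (abs_nonneg (t/2)) with h | h
    · simp [← h]
    · exact (Real.self_lt_sinh_iff.2 h).le
  have h4 : (t/2)^2 ≤ Real.sinh (t/2)^2 := by
    calc (t/2)^2 = |t/2|^2 := (sq_abs _).symm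
    _ ≤ Real.sinh |t/2|^2 := by
        apply pow_le_pow_left₀ (abs_nonneg _) h3
    _ = |Real.sinh (t/2)|^2 := by rw [Real.abs_sinh]
    _ = Real.sinh (t/2)^2 := sq_abs _
  nlinarith [h1, h2, h4]

lemma besselK_integrand_integrable (ν : ℝ) {x : ℝ} (hx : 0 < x) :
    Integrable (fun t : ℝ => Real.exp (-x * Real.cosh t + ν * t)) := by
  have hb : 0 < x/2 := by linarith
  have hg : Integrable (fun t : ℝ => Real.exp (-x + ν^2/(2*x)) * Real.exp (-(x/2) * (t - ν/x)^2)) :=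
    ((integrable_exp_neg_mul_sq hb).comp_sub_right (ν/x)).const_mul _
  apply hg.mono'
  · exact (Continuous.rexp (by continuity)).aestronglyMeasurable
  · filter_upwards with t
    rw [norm_of_nonneg (Real.exp_pos _).le, ← Real.exp_add, Real.exp_le_exp]
    have h := cosh_ge t
    have hx' := hx.ne'
    have : -x * Real.cosh t ≤ -x * (1 + t^2/2) := by
      apply mul_le_mul_of_nonpos_left h (by linarith)
    calc -x * Real.cosh t + ν * t ≤ -x * (1 + t^2/2) + ν * t := by linarith
    _ = -x + ν^2/(2*x) + -(x/2) * (t - ν/x)^2 := by field_simp; ring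

lemma besselK_eq_real_line (ν : ℝ) {x : ℝ} (hx : 0 < x) :
    besselK ν x = (1/2) * ∫ t : ℝ, Real.exp (-x * Real.cosh t + ν * t) := by
  have hI := besselK_integrand_integrable ν hx
  have hI' := besselK_integrand_integrable (-ν) hx
  have hsplit : (∫ t : ℝ, Real.exp (-x * Real.cosh t + ν * t)) =
      (∫ t in Iic (0:ℝ), Real.exp (-x * Real.cosh t + ν * t)) +
      ∫ t in Ioi (0:ℝ), Real.exp (-x * Real.cosh t + ν * t) :=
    (intervalIntegral.integral_Iic_add_Ioi hI.integrableOn hI.integrableOn).symm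
  have hneg : (∫ t in Iic (0:ℝ), Real.exp (-x * Real.cosh t + ν * t)) =
      ∫ t in Ioi (0:ℝ), Real.exp (-x * Real.cosh t + -ν * t) := by
    rw [show Iic (0:ℝ) = Iic (-0) by norm_num, ← integral_comp_neg_Ioi]
    apply setIntegral_congr_fun measurableSet_Ioi
    intro t _
    simp only [Real.cosh_neg]
    ring_nf
  rw [hsplit, hneg, besselK, ← integral_add hI'.integrableOn hI.integrableOn,
    ← integral_const_mul]
  apply setIntegral_congr_fun measurableSet_Ioi
  intro t _
  simp only []
  rw [Real.cosh_eq (ν*t), Real.exp_add, Real.exp_add, Real.exp_neg]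
  have h := (Real.exp_pos (ν*t)).ne'
  have h2 : Real.exp (ν*t) * Real.exp (-(ν*t)) = 1 := by rw [← Real.exp_add]; simp
  field_simp
  linear_combination (-1 : ℝ) * h2

lemma integral_Ioi_eq_integral_exp (g : ℝ → ℝ) :
    ∫ u in Ioi (0:ℝ), g u = ∫ t : ℝ, Real.exp t * g (Real.exp t) := by
  have h := integral_image_eq_integral_abs_deriv_smul MeasurableSet.univ
    (fun t (_ : t ∈ univ) => (Real.hasDerivAt_exp t).hasDerivWithinAt)
    (Real.exp_injective.injOn) g
  rw [image_univ, Real.range_exp] at h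
  rw [h, setIntegral_univ]
  congr 1
  funext t
  rw [abs_of_pos (Real.exp_pos _), smul_eq_mul]

lemma besselK_eq_Ioi (ν : ℝ) {x : ℝ} (hx : 0 < x) :
    besselK ν x = (1/2) * ∫ u in Ioi (0:ℝ), u^(ν-1) * Real.exp (-(x/2) * (u + u⁻¹)) := by
  rw [besselK_eq_real_line ν hx, integral_Ioi_eq_integral_exp]
  congr 1
  apply integral_congr_ae
  filter_upwards with t
  rw [Real.rpow_def_of_pos (Real.exp_pos t), Real.log_exp, ← Real.exp_neg, Real.cosh_eq,
    ← Real.exp_add, ← Real.exp_add]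
  congr 1
  ring

lemma inner_integral_eq (ν : ℝ) {z : ℝ} (hz : 0 < z) :
    ∫ v in Ioi (0:ℝ), v^(ν-1) * Real.exp (-v - z/v)
      = 2 * z^(ν/2) * besselK ν (2 * Real.sqrt z) := by
  have hsz : 0 < Real.sqrt z := Real.sqrt_pos.2 hz
  have h := integral_comp_mul_left_Ioi
    (fun v => v^(ν-1) * Real.exp (-v - z/v)) 0 hsz
  rw [mul_zero, smul_eq_mul] at h
  have h2 : ∀ u ∈ Ioi (0:ℝ), (Real.sqrt z * u)^(ν-1) * Real.exp (-(Real.sqrt z * u) - z/(Real.sqrt z * u))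
      = Real.sqrt z ^ (ν-1) * (u^(ν-1) * Real.exp (-(2 * Real.sqrt z/2) * (u + u⁻¹))) := by
    intro u hu
    have hu : (0:ℝ) < u := hu
    rw [Real.mul_rpow hsz.le hu.le]
    have hzv : z / (Real.sqrt z * u) = Real.sqrt z / u := by
      rw [div_mul_eq_div_div, Real.div_sqrt]
    rw [hzv]
    have : -(Real.sqrt z * u) - Real.sqrt z / u = -(2 * Real.sqrt z/2) * (u + u⁻¹) := by
      field_simp
      ring
    rw [this]
    ring
  rw [setIntegral_congr_fun measurableSet_Ioi h2] at h
  rw [integral_const_mul] at h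
  have h3 : (∫ v in Ioi (0:ℝ), v^(ν-1) * Real.exp (-v - z/v))
      = Real.sqrt z * (Real.sqrt z ^ (ν-1) *
        ∫ u in Ioi (0:ℝ), u^(ν-1) * Real.exp (-(2 * Real.sqrt z/2) * (u + u⁻¹))) := by
    rw [h, ← mul_assoc, mul_inv_cancel₀ hsz.ne', one_mul]
  rw [h3, besselK_eq_Ioi ν (by positivity : (0:ℝ) < 2 * Real.sqrt z)]
  have h4 : Real.sqrt z * Real.sqrt z ^ (ν-1) = z^(ν/2) := by
    nth_rewrite 1 [← Real.rpow_one (Real.sqrt z)]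
    rw [← Real.rpow_add hsz, Real.rpow_def_of_pos hsz, Real.log_sqrt hz.le,
      Real.rpow_def_of_pos hz]
    congr 1
    ring
  rw [← mul_assoc, h4]
  ring

lemma integrableOn_rpow_exp {a r : ℝ} (ha : 0 < a) (hr : 0 < r) :
    IntegrableOn (fun x : ℝ => x ^ (a-1) * Real.exp (-(r*x))) (Ioi 0) := by
  have h := Real.GammaIntegral_convergent ha
  have h2 : IntegrableOn (fun x : ℝ => Real.exp (-(r*x)) * (r*x)^(a-1)) (Ioi 0) := by
    have := (integrableOn_Ioi_comp_mul_left_iff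
      (fun x : ℝ => Real.exp (-x) * x ^ (a-1)) 0 hr).2 (by simpa using h)
    simpa using this
  have h3 : IntegrableOn (fun x : ℝ => r ^ (1-a) * (Real.exp (-(r*x)) * (r*x)^(a-1))) (Ioi 0) :=
    h2.const_mul (r ^ (1-a))
  apply h3.congr_fun ?_ measurableSet_Ioi
  intro x hx
  have hx : (0:ℝ) < x := hx
  show r ^ (1-a) * (Real.exp (-(r*x)) * (r*x)^(a-1)) = x^(a-1) * Real.exp (-(r*x))
  rw [Real.mul_rpow hr.le hx.le, ← mul_assoc, ← mul_assoc, mul_comm (r ^ (1-a)) _,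
    mul_assoc _ (r ^ (1-a)) _, ← Real.rpow_add hr]
  norm_num
  ring

lemma besselK_nonneg (ν x : ℝ) : 0 ≤ besselK ν x := by
  apply setIntegral_nonneg measurableSet_Ioi
  intro t _
  positivity

lemma besselK_measurable (ν : ℝ) : Measurable (besselK ν) := by
  have hc : Continuous fun p : ℝ × ℝ => Real.exp (-p.1 * Real.cosh p.2) * Real.cosh (ν * p.2) := by
    continuity
  exact (hc.stronglyMeasurable.integral_prod_right').measurable

lemma fubini_main {α β s c : ℝ} (hα : 0 < α + s) (hβ : 0 < β + s) (hc : 0 < c) :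
    ∫ x in Ioi (0:ℝ), x^(β+s-1) * ∫ v in Ioi (0:ℝ), v^(α-β-1) * Real.exp (-v - c*x/v)
      = Real.Gamma (α+s) * Real.Gamma (β+s) * c^(-(β+s)) := by
  set F : ℝ → ℝ → ℝ := fun x v => x^(β+s-1) * (v^(α-β-1) * Real.exp (-v - c*x/v)) with hF
  set μ : Measure ℝ := volume.restrict (Ioi 0) with hμ
  have hsec : ∀ v : ℝ, v ∈ Ioi (0:ℝ) → Integrable (fun x => F x v) μ := by
    intro v hv
    have hv : (0:ℝ) < v := hv
    have h1 : IntegrableOn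
        (fun x : ℝ => (v^(α-β-1) * Real.exp (-v)) * (x ^ ((β+s)-1) * Real.exp (-((c/v)*x))))
        (Ioi 0) := (integrableOn_rpow_exp hβ (div_pos hc hv)).const_mul _
    apply h1.congr (Filter.Eventually.of_forall ?_)
    intro x
    show _ = F x v
    rw [hF]
    simp only []
    rw [show -v - c*x/v = -v + -((c/v)*x) by field_simp; ring, Real.exp_add]
    ring
  have hval : ∀ v : ℝ, v ∈ Ioi (0:ℝ) → (∫ x, F x v ∂μ)
      = Real.Gamma (β+s) * (c^(-(β+s)) * (v ^ ((α+s)-1) * Real.exp (-(1*v)))) := by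
    intro v hv
    have hv : (0:ℝ) < v := hv
    have h1 : (∫ x, F x v ∂μ)
        = (v^(α-β-1) * Real.exp (-v)) * ∫ x in Ioi (0:ℝ), x ^ ((β+s)-1) * Real.exp (-((c/v)*x)) := by
      rw [← integral_const_mul]
      apply setIntegral_congr_fun measurableSet_Ioi
      intro x _
      show F x v = _
      rw [hF]; simp only []
      rw [show -v - c*x/v = -v + -((c/v)*x) by field_simp; ring, Real.exp_add]
      ring
    rw [h1, integral_rpow_mul_exp_neg_mul_Ioi hβ (div_pos hc hv)]
    rw [one_div, inv_div, div_rpow hv.le hc.le, Real.rpow_neg hc.le, one_mul]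
    rw [div_eq_mul_inv (v ^ (β+s)) _]
    have hvv : v ^ (α-β-1) * v^(β+s) = v ^ ((α+s)-1) := by
      rw [← Real.rpow_add hv, show α-β-1+(β+s) = (α+s)-1 by ring]
    linear_combination (Real.exp (-v) * (c ^ (β+s))⁻¹ * Real.Gamma (β+s)) * hvv
  have hFm : AEStronglyMeasurable (Function.uncurry F) (μ.prod μ) := by
    apply Measurable.aestronglyMeasurable
    apply Measurable.mul
    · exact measurable_fst.pow_const _
    · apply Measurable.mul
      · exact measurable_snd.pow_const _
      · exact (measurable_snd.neg.sub
          ((measurable_fst.const_mul c).div measurable_snd)).exp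
  have hnormval : ∀ v : ℝ, v ∈ Ioi (0:ℝ) → (∫ x, ‖F x v‖ ∂μ) = ∫ x, F x v ∂μ := by
    intro v hv
    have hv : (0:ℝ) < v := hv
    apply integral_congr_ae
    filter_upwards [ae_restrict_mem measurableSet_Ioi] with x hx
    have hx : (0:ℝ) < x := hx
    apply norm_of_nonneg
    rw [hF]
    positivity
  have hint : Integrable (Function.uncurry F) (μ.prod μ) := by
    refine (integrable_prod_iff' hFm).2 ⟨?_, ?_⟩
    · filter_upwards [ae_restrict_mem measurableSet_Ioi] with v hv
      exact hsec v hv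
    · have g_int : IntegrableOn
          (fun v : ℝ => (Real.Gamma (β+s) * c^(-(β+s))) * (v ^ ((α+s)-1) * Real.exp (-(1*v))))
          (Ioi 0) := (integrableOn_rpow_exp hα one_pos).const_mul _
      apply g_int.congr
      filter_upwards [ae_restrict_mem measurableSet_Ioi] with v hv
      simp only [Function.uncurry_apply_pair]
      rw [hnormval v hv, hval v hv]
      ring
  have hswap : (∫ x, ∫ v, F x v ∂μ ∂μ) = ∫ v, ∫ x, F x v ∂μ ∂μ :=
    integral_integral_swap hint
  calc (∫ x in Ioi (0:ℝ), x^(β+s-1) * ∫ v in Ioi (0:ℝ), v^(α-β-1) * Real.exp (-v - c*x/v))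
      = ∫ x, ∫ v, F x v ∂μ ∂μ := by
        apply setIntegral_congr_fun measurableSet_Ioi
        intro x _
        simp only []
        rw [← integral_const_mul]
    _ = ∫ v, ∫ x, F x v ∂μ ∂μ := hswap
    _ = ∫ v in Ioi (0:ℝ), Real.Gamma (β+s) * (c^(-(β+s)) * (v ^ ((α+s)-1) * Real.exp (-(1*v)))) := by
        apply setIntegral_congr_fun measurableSet_Ioi
        intro v hv
        exact hval v hv
    _ = Real.Gamma (β+s) * (c^(-(β+s)) * ∫ v in Ioi (0:ℝ), v ^ ((α+s)-1) * Real.exp (-(1*v)) ) := by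
        rw [← integral_const_mul, ← integral_const_mul]
    _ = Real.Gamma (α+s) * Real.Gamma (β+s) * c^(-(β+s)) := by
        rw [integral_rpow_mul_exp_neg_mul_Ioi hα one_pos]
        norm_num
        ring

lemma gammaGamma_moment_aux (α β Ωm s : ℝ)
    (hα : 0 < α) (hβ : 0 < β) (hΩ : 0 < Ωm) (hs : max (-α) (-β) < s)
    {E : Type*} [MeasureSpace E] [IsProbabilityMeasure (ℙ : Measure E)]
    (X : E → ℝ) (hXm : Measurable X)
    (hmap : Measure.map X ℙ = volume.withDensity fun x =>
      ENNReal.ofReal (if 0 < x then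
        2 / (Real.Gamma α * Real.Gamma β) * (α * β / Ωm) ^ ((α + β) / 2) *
          x ^ ((α + β) / 2 - 1) * besselK (α - β) (2 * Real.sqrt (α * β * x / Ωm))
        else 0)) :
    ∫ ω, X ω ^ s ∂ℙ =
        (Ωm / (α * β)) ^ s * (Real.Gamma (α + s) * Real.Gamma (β + s) /
          (Real.Gamma α * Real.Gamma β)) := by
  obtain ⟨hsa, hsb⟩ := max_lt_iff.1 hs
  have hαs : 0 < α + s := by linarith
  have hβs : 0 < β + s := by linarith
  set c : ℝ := α * β / Ωm with hcdef
  have hc : 0 < c := by positivity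
  have hΓα := Real.Gamma_pos_of_pos hα
  have hΓβ := Real.Gamma_pos_of_pos hβ
  set d : ℝ → ℝ := fun x => if 0 < x then
      2 / (Real.Gamma α * Real.Gamma β) * c ^ ((α + β) / 2) *
        x ^ ((α + β) / 2 - 1) * besselK (α - β) (2 * Real.sqrt (α * β * x / Ωm))
      else 0 with hd
  have hdm : Measurable d := by
    apply Measurable.ite measurableSet_Ioi ?_ measurable_const
    apply Measurable.mul
    · exact (measurable_const.mul (measurable_id.pow_const _))
    · apply (besselK_measurable (α-β)).comp
      apply Measurable.const_mul
      exact (measurable_id.const_mul (α*β) |>.div_const Ωm).sqrt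
  have hd0 : ∀ x, 0 ≤ d x := by
    intro x
    rw [hd]
    by_cases hx : 0 < x
    · simp only [if_pos hx]
      have := besselK_nonneg (α-β) (2 * Real.sqrt (α * β * x / Ωm))
      have h1 : (0:ℝ) ≤ c ^ ((α + β) / 2) := (Real.rpow_pos_of_pos hc _).le
      have h2 : (0:ℝ) ≤ x ^ ((α + β) / 2 - 1) := (Real.rpow_pos_of_pos hx _).le
      positivity
    · simp [if_neg hx]
  have step1 : ∫ ω, X ω ^ s ∂ℙ = ∫ x, x ^ s ∂(Measure.map X ℙ) :=
    (integral_map hXm.aemeasurable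
      ((measurable_id.pow_const s).aestronglyMeasurable)).symm
  rw [step1, hmap]
  have step2 : (volume.withDensity fun x => ENNReal.ofReal (if 0 < x then
        2 / (Real.Gamma α * Real.Gamma β) * (α * β / Ωm) ^ ((α + β) / 2) *
          x ^ ((α + β) / 2 - 1) * besselK (α - β) (2 * Real.sqrt (α * β * x / Ωm))
        else 0)) = volume.withDensity fun x => ((d x).toNNReal : ℝ≥0∞) := rfl
  rw [step2, integral_withDensity_eq_integral_smul hdm.real_toNNReal]
  have step3 : ∀ x : ℝ, (d x).toNNReal • x ^ s = d x * x ^ s := by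
    intro x
    rw [NNReal.smul_def, smul_eq_mul, Real.coe_toNNReal _ (hd0 x)]
  rw [integral_congr_ae (Filter.Eventually.of_forall step3)]
  have step4 : (fun x : ℝ => d x * x ^ s) = (Ioi (0:ℝ)).indicator (fun x =>
      (2 / (Real.Gamma α * Real.Gamma β) * c ^ ((α + β) / 2) *
        x ^ ((α + β) / 2 - 1) * besselK (α - β) (2 * Real.sqrt (α * β * x / Ωm))) * x ^ s) := by
    funext x
    rw [hd]
    simp only []
    by_cases hx : 0 < x
    · rw [if_pos hx, Set.indicator_of_mem (show x ∈ Ioi 0 from hx)]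
    · rw [if_neg hx, Set.indicator_of_notMem (show x ∉ Ioi 0 from hx), zero_mul]
  rw [step4, integral_indicator measurableSet_Ioi]
  have step5 : ∀ x : ℝ, x ∈ Ioi (0:ℝ) →
      (2 / (Real.Gamma α * Real.Gamma β) * c ^ ((α + β) / 2) *
        x ^ ((α + β) / 2 - 1) * besselK (α - β) (2 * Real.sqrt (α * β * x / Ωm))) * x ^ s
      = (c ^ β / (Real.Gamma α * Real.Gamma β)) *
        (x^(β+s-1) * ∫ v in Ioi (0:ℝ), v^(α-β-1) * Real.exp (-v - c*x/v)) := by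
    intro x hx
    have hx : (0:ℝ) < x := hx
    have hzx : (0:ℝ) < c * x := by positivity
    have hsq : α * β * x / Ωm = c * x := by rw [hcdef]; ring
    rw [hsq]
    have hinner := inner_integral_eq (α-β) hzx
    rw [show (α-β-1) = (α-β)-1 by ring] at hinner
    rw [hinner]
    have e3 : (c*x) ^ ((α-β)/2) = c ^ ((α-β)/2) * x ^ ((α-β)/2) :=
      Real.mul_rpow hc.le hx.le
    have e1 : c ^ ((α+β)/2) = c ^ β * c ^ ((α-β)/2) := by
      rw [← Real.rpow_add hc]
      congr 1
      ring
    have e2 : x ^ ((α+β)/2 - 1) * x ^ s = x ^ (β+s-1) * x ^ ((α-β)/2) := by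
      rw [← Real.rpow_add hx, ← Real.rpow_add hx]
      congr 1
      ring
    rw [e3, e1]
    linear_combination (2 / (Real.Gamma α * Real.Gamma β) * (c ^ β * c^((α-β)/2)) *
      besselK (α-β) (2 * Real.sqrt (c*x))) * e2
  rw [setIntegral_congr_fun measurableSet_Ioi step5, integral_const_mul, fubini_main hαs hβs hc]
  have e4 : c ^ β * c ^ (-(β+s)) = c ^ (-s) := by
    rw [← Real.rpow_add hc]
    congr 1
    ring
  have e5 : (Ωm / (α * β)) ^ s = c ^ (-s) := by
    have hinv : Ωm / (α * β) = c⁻¹ := by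
      rw [hcdef, inv_div]
    rw [hinv, Real.inv_rpow hc.le, ← Real.rpow_neg hc.le]
  rw [e5]
  linear_combination (Real.Gamma (α+s) * Real.Gamma (β+s) /
    (Real.Gamma α * Real.Gamma β)) * e4

theorem gammaGamma_moments (α β Ωm s : ℝ)
    (hα : 0 < α) (hβ : 0 < β) (hΩ : 0 < Ωm) (hs : max (-α) (-β) < s)
    {E : Type*} [MeasureSpace E] [IsProbabilityMeasure (ℙ : Measure E)]
    (X : E → ℝ) (hXm : Measurable X)
    (hmap : Measure.map X ℙ = volume.withDensity fun x =>
      ENNReal.ofReal (if 0 < x then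
        2 / (Real.Gamma α * Real.Gamma β) * (α * β / Ωm) ^ ((α + β) / 2) *
          x ^ ((α + β) / 2 - 1) * besselK (α - β) (2 * Real.sqrt (α * β * x / Ωm))
        else 0)) :
    (∫ ω, X ω ^ s ∂ℙ =
        (Ωm / (α * β)) ^ s * (Real.Gamma (α + s) * Real.Gamma (β + s) /
          (Real.Gamma α * Real.Gamma β))) ∧
      ∫ ω, X ω ∂ℙ = Ωm := by
  constructor
  · exact gammaGamma_moment_aux α β Ωm s hα hβ hΩ hs X hXm hmap
  · have h1 := gammaGamma_moment_aux α β Ωm 1 hα hβ hΩ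
      (max_lt (by linarith) (by linarith)) X hXm hmap
    have h2 : ∫ ω, X ω ∂ℙ = ∫ ω, X ω ^ (1:ℝ) ∂ℙ := by
      simp [Real.rpow_one]
    rw [h2, h1, Real.rpow_one, Real.Gamma_add_one hα.ne', Real.Gamma_add_one hβ.ne']
    have hΓα := (Real.Gamma_pos_of_pos hα).ne'
    have hΓβ := (Real.Gamma_pos_of_pos hβ).ne'
    have hab : (α*β) ≠ 0 := by positivity
    field_simp
end

section
/- If γ_th satisfies γ_th > 1/(κ_t² + κ_r²), equivalently if the spectral efficiency p = log₂(1 + γ_th) exceeds log₂(1 + 1/(κ_t² + κ_r²)), then for every realization a ≥ 0 of the squared channel gain, the SDNR aP/(a(κ_t²+κ_r²)P + N) is at most γ_th, so the outage probability equals 1. -/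
open MeasureTheory ProbabilityTheory

theorem hardware_caps_spectral_efficiency (P N κt κr γth : ℝ)
    (hP : 0 < P) (hN : 0 < N) (hκt : 0 < κt) (hκr : 0 < κr)
    (hγ : 1 / (κt ^ 2 + κr ^ 2) < γth)
    {Ω : Type*} [MeasureSpace Ω] [IsProbabilityMeasure (ℙ : Measure Ω)]
    (A : Ω → ℝ) :
    (∀ a : ℝ, 0 ≤ a → a * P / (a * (κt ^ 2 + κr ^ 2) * P + N) ≤ γth) ∧
      ℙ {ω | (A ω) ^ 2 * P / ((A ω) ^ 2 * (κt ^ 2 + κr ^ 2) * P + N) ≤ γth} = 1 := by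
  have hκ : 0 < κt ^ 2 + κr ^ 2 := by positivity
  have key : ∀ a : ℝ, 0 ≤ a → a * P / (a * (κt ^ 2 + κr ^ 2) * P + N) ≤ γth := by
    intro a ha
    have hden : 0 < a * (κt ^ 2 + κr ^ 2) * P + N := by positivity
    rw [div_le_iff₀ hden]
    have h1 : a * P * (κt ^ 2 + κr ^ 2) ≤ (a * (κt ^ 2 + κr ^ 2) * P + N) := by nlinarith
    have h2 : (1 : ℝ) / (κt ^ 2 + κr ^ 2) * (a * (κt ^ 2 + κr ^ 2) * P + N)
        ≤ γth * (a * (κt ^ 2 + κr ^ 2) * P + N) := by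
      exact mul_le_mul_of_nonneg_right hγ.le hden.le
    calc a * P = 1 / (κt ^ 2 + κr ^ 2) * (a * P * (κt ^ 2 + κr ^ 2)) := by
          field_simp
      _ ≤ 1 / (κt ^ 2 + κr ^ 2) * (a * (κt ^ 2 + κr ^ 2) * P + N) := by
          apply mul_le_mul_of_nonneg_left h1 (by positivity)
      _ ≤ γth * (a * (κt ^ 2 + κr ^ 2) * P + N) := h2
  refine ⟨key, ?_⟩
  have : {ω | (A ω) ^ 2 * P / ((A ω) ^ 2 * (κt ^ 2 + κr ^ 2) * P + N) ≤ γth} = Set.univ := by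
    ext ω; simp [key ((A ω) ^ 2) (sq_nonneg _)]
  rw [this]
  simp
end
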